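/- Let ij be an ordered pair of units. Suppose Y_{i,1}, Y_{j,0}, Y*_{ij}(1), Y*_{ij}(0) are {0,1}-valued random variables on a probability space satisfying the consistency relations Y_{i,1}·Y_{j,0} = Y*_{ij}(1)·Y_{j,0} and Y_{i,1}·(1−Y_{j,0}) = Y*_{ij}(0)·(1−Y_{j,0}) almost surely, and suppose the pair (Y*_{ij}(1), Y*_{ij}(0)) is conditionally independent of Y_{j,0} given a sub-σ-algebra 𝒢. Then, almost surely, E[Y*_{ij}(1) − Y*_{ij}(0) | 𝒢] · μ_{j,0}(1 − μ_{j,0}) = Cov(Y_{i,1}, Y_{j,0} | 𝒢), where μ_{j,0} = E[Y_{j,0} | 𝒢]. -/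

import Mathlib

open MeasureTheory ProbabilityTheory

/-- Conditional covariance of two real random variables given a sub-σ-algebra `m`:
`Cov(X, Y | m) = E[XY|m] − E[X|m]·E[Y|m]`. -/
noncomputable def condCov {Ω : Type*} {m0 : MeasurableSpace Ω} (μ : Measure Ω)
    (m : MeasurableSpace Ω) (X Y : Ω → ℝ) : Ω → ℝ :=
  fun ω => (μ[fun ω' => X ω' * Y ω' | m]) ω - (μ[X | m]) ω * (μ[Y | m]) ω

/-- edge-level identification identity, proof of Lemma 2.1(A) of
He–Song, "Measuring Diffusion over a Large Network".
If `Y_{i,1}, Y_{j,0}, Y*_{ij}(1), Y*_{ij}(0)` are `{0,1}`-valued, satisfy the consistency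
relations, and the pair of counterfactuals is conditionally independent of `Y_{j,0}` given `𝒢`,
then a.s. `E[Y*_{ij}(1) − Y*_{ij}(0) | 𝒢] · μ_{j,0}(1 − μ_{j,0}) = Cov(Y_{i,1}, Y_{j,0} | 𝒢)`. -/
theorem stmt0 {Ω : Type*} [mΩ : MeasurableSpace Ω] [StandardBorelSpace Ω]
    (μ : Measure Ω) [IsProbabilityMeasure μ]
    (Yi1 Yj0 Ys1 Ys0 : Ω → ℝ)
    (hYi1 : Measurable Yi1) (hYj0 : Measurable Yj0)
    (hYs1 : Measurable Ys1) (hYs0 : Measurable Ys0)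
    (hYi1b : ∀ ω, Yi1 ω = 0 ∨ Yi1 ω = 1)
    (hYj0b : ∀ ω, Yj0 ω = 0 ∨ Yj0 ω = 1)
    (hYs1b : ∀ ω, Ys1 ω = 0 ∨ Ys1 ω = 1)
    (hYs0b : ∀ ω, Ys0 ω = 0 ∨ Ys0 ω = 1)
    (G : MeasurableSpace Ω) (hG : G ≤ mΩ)
    (hcons1 : ∀ᵐ ω ∂μ, Yi1 ω * Yj0 ω = Ys1 ω * Yj0 ω)
    (hcons0 : ∀ᵐ ω ∂μ, Yi1 ω * (1 - Yj0 ω) = Ys0 ω * (1 - Yj0 ω))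
    (hindep : CondIndepFun G hG (fun ω => (Ys1 ω, Ys0 ω)) Yj0 μ) :
    ∀ᵐ ω ∂μ,
      (μ[fun ω' => Ys1 ω' - Ys0 ω' | G]) ω
          * ((μ[Yj0 | G]) ω * (1 - (μ[Yj0 | G]) ω))
        = condCov μ G Yi1 Yj0 ω := by
  classical
  -- integrability of binary variables
  have hint : ∀ (f : Ω → ℝ), Measurable[mΩ] f → (∀ ω, f ω = 0 ∨ f ω = 1) → Integrable f μ := by
    intro f hf hfb
    refine Integrable.mono' (integrable_const 1) hf.aestronglyMeasurable ?_
    filter_upwards with ω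
    rcases hfb ω with h | h <;> simp [h]
  have hiYs1 := hint Ys1 hYs1 hYs1b
  have hiYs0 := hint Ys0 hYs0 hYs0b
  have hiYj0 := hint Yj0 hYj0 hYj0b
  have hmul : ∀ (f g : Ω → ℝ), (∀ ω, f ω = 0 ∨ f ω = 1) → (∀ ω, g ω = 0 ∨ g ω = 1) →
      ∀ ω, f ω * g ω = 0 ∨ f ω * g ω = 1 := by
    intro f g hfb hgb ω
    rcases hfb ω with h | h <;> rcases hgb ω with h' | h' <;> simp [h, h']
  have hiS1 := hint _ (hYs1.mul hYj0) (hmul _ _ hYs1b hYj0b)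
  have hiS0 := hint _ (hYs0.mul hYj0) (hmul _ _ hYs0b hYj0b)
  -- binary functions as indicators
  have hind : ∀ (f : Ω → ℝ), (∀ ω, f ω = 0 ∨ f ω = 1) →
      f = (f ⁻¹' {1}).indicator (fun _ => (1 : ℝ)) := by
    intro f hfb
    funext ω
    rcases hfb ω with h | h <;> simp [Set.indicator, h]
  -- conditional independence of components with Yj0
  have h1indep : CondIndepFun G hG Ys1 Yj0 μ :=
    hindep.comp (measurable_fst) measurable_id
  have h0indep : CondIndepFun G hG Ys0 Yj0 μ :=
    hindep.comp (measurable_snd) measurable_id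
  -- factorization of conditional expectations of products
  have hfact : ∀ (f : Ω → ℝ), Measurable[mΩ] f → (∀ ω, f ω = 0 ∨ f ω = 1) →
      CondIndepFun G hG f Yj0 μ →
      (μ[fun ω => f ω * Yj0 ω | G]) =ᵐ[μ] fun ω => (μ[f | G]) ω * (μ[Yj0 | G]) ω := by
    intro f hf hfb hfi
    have key := (condIndepFun_iff_condExp_inter_preimage_eq_mul hf hYj0).mp hfi
      {1} {1} (measurableSet_singleton 1) (measurableSet_singleton 1)
    have hprod : (fun ω => f ω * Yj0 ω)
        = (f ⁻¹' {1} ∩ Yj0 ⁻¹' {1}).indicator (fun _ => (1 : ℝ)) := by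
      funext ω
      rcases hfb ω with h | h <;> rcases hYj0b ω with h' | h' <;>
        simp [Set.indicator, Set.mem_inter_iff, h, h']
    have ef : (μ[(f ⁻¹' {1}).indicator (fun _ => (1 : ℝ)) | G]) = μ[f | G] := by
      rw [← hind f hfb]
    have eg : (μ[(Yj0 ⁻¹' {1}).indicator (fun _ => (1 : ℝ)) | G]) = μ[Yj0 | G] := by
      rw [← hind Yj0 hYj0b]
    rw [hprod]
    rw [ef, eg] at key
    exact key
  have hf1 := hfact Ys1 hYs1 hYs1b h1indep
  have hf0 := hfact Ys0 hYs0 hYs0b h0indep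
  -- Yi1 in terms of counterfactuals
  have hmix : Yi1 =ᵐ[μ] fun ω => Ys1 ω * Yj0 ω + (Ys0 ω - Ys0 ω * Yj0 ω) := by
    filter_upwards [hcons1, hcons0] with ω h1 h0
    have : Yi1 ω = Yi1 ω * Yj0 ω + Yi1 ω * (1 - Yj0 ω) := by ring
    rw [this, h1, h0]; ring
  have hEYi1 : (μ[Yi1 | G]) =ᵐ[μ]
      fun ω => (μ[fun ω' => Ys1 ω' * Yj0 ω' | G]) ω
        + ((μ[Ys0 | G]) ω - (μ[fun ω' => Ys0 ω' * Yj0 ω' | G]) ω) := by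
    refine (condExp_congr_ae hmix).trans ?_
    refine (condExp_add hiS1 (hiYs0.sub hiS0) G).trans ?_
    filter_upwards [condExp_sub hiYs0 hiS0 G] with ω hs
    simp only [Pi.add_apply]
    rw [hs]
    rfl
  -- product Yi1 * Yj0
  have hEprod : (μ[fun ω' => Yi1 ω' * Yj0 ω' | G]) =ᵐ[μ]
      (μ[fun ω' => Ys1 ω' * Yj0 ω' | G]) :=
    condExp_congr_ae hcons1
  have hEdiff : (μ[fun ω' => Ys1 ω' - Ys0 ω' | G]) =ᵐ[μ]
      fun ω => (μ[Ys1 | G]) ω - (μ[Ys0 | G]) ω := by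
    filter_upwards [condExp_sub hiYs1 hiYs0 G] with ω h
    exact h
  filter_upwards [hf1, hf0, hEYi1, hEprod, hEdiff] with ω k1 k0 kY kP kD
  simp only [condCov]
  rw [kD, kP, k1, kY, k1, k0]
  ring
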